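/- arXiv:2211.00863 — 2 statements merged into one kernel-verified Lean document; each statement's English description precedes it below -/
import Mathlib

section
/- Let S and A be nonempty finite types, T : S → A → PMF S a transition kernel, r : S → A → ℝ a reward function with 0 ≤ r(s,a) ≤ R_max for all s, a, and γ ∈ [0,1) a discount factor. Let π₁, π₂ : S → PMF A be two policies and V₁, V₂ : S → ℝ satisfy the respective Bellman equations, i.e. Vᵢ(s) = Σ_a πᵢ(s)(a) · ( r(s,a) + γ · Σ_{s'} T(s,a)(s') · Vᵢ(s') ) for all s and i ∈ {1,2}. Then for every state s, |V₁(s) − V₂(s)| ≤ (R_max / (1 − γ)²) · sup_{s'} Σ_a |π₁(s')(a) − π₂(s')(a)|; equivalently, since the total variation distance satisfies D_TV(π₁(s'), π₂(s')) = (1/2) Σ_a |π₁(s')(a) − π₂(s')(a)|, |V₁(s) − V₂(s)| ≤ (2 R_max / (1 − γ)²) · sup_{s'} D_TV(π₁(s'), π₂(s')). -/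
open scoped BigOperators

private lemma pmf_sum_toReal {A : Type*} [Fintype A] (p : PMF A) :
    ∑ a, (p a).toReal = 1 := by
  have h : ∑ a, p a = 1 := by rw [← p.tsum_coe, tsum_fintype]
  calc ∑ a, (p a).toReal
      = (∑ a, p a).toReal :=
        (ENNReal.toReal_sum (fun a _ => p.apply_ne_top a)).symm
    _ = 1 := by rw [h]; simp

private lemma weighted_avg_le {A : Type*} [Fintype A] (p : PMF A) (f : A → ℝ) (c : ℝ)
    (hf : ∀ a, |f a| ≤ c) : |∑ a, (p a).toReal * f a| ≤ c := by
  calc |∑ a, (p a).toReal * f a| ≤ ∑ a, |(p a).toReal * f a| :=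
        Finset.abs_sum_le_sum_abs _ _
    _ ≤ ∑ a, (p a).toReal * c := by
        apply Finset.sum_le_sum
        intro a _
        rw [abs_mul, abs_of_nonneg ENNReal.toReal_nonneg]
        exact mul_le_mul_of_nonneg_left (hf a) ENNReal.toReal_nonneg
    _ = c := by rw [← Finset.sum_mul, pmf_sum_toReal, one_mul]

private lemma value_abs_bound {S A : Type*} [Fintype S] [Fintype A] [Nonempty S] [Nonempty A]
    (T : S → A → PMF S) (pol : S → PMF A) (r : S → A → ℝ) (Rmax : ℝ)
    (hr : ∀ s a, 0 ≤ r s a ∧ r s a ≤ Rmax)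
    (γ : ℝ) (hγ0 : 0 ≤ γ) (hγ1 : γ < 1)
    (V : S → ℝ)
    (hV : ∀ s, V s = ∑ a, (pol s a).toReal *
        (r s a + γ * ∑ s', (T s a s').toReal * V s')) :
    ∀ s, |V s| ≤ Rmax / (1 - γ) := by
  have hpos : (0:ℝ) < 1 - γ := by linarith
  obtain ⟨s₀, -, hs₀⟩ := Finset.exists_max_image Finset.univ (fun s => |V s|)
    ⟨Classical.arbitrary S, Finset.mem_univ _⟩
  have hmax : ∀ s, |V s| ≤ |V s₀| := fun s => hs₀ s (Finset.mem_univ s)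
  have key : |V s₀| ≤ Rmax + γ * |V s₀| := by
    conv_lhs => rw [hV s₀]
    apply weighted_avg_le
    intro a
    have h1 : |r s₀ a| ≤ Rmax := by
      rw [abs_of_nonneg (hr s₀ a).1]; exact (hr s₀ a).2
    have h2 : |∑ s', (T s₀ a s').toReal * V s'| ≤ |V s₀| :=
      weighted_avg_le (T s₀ a) V (|V s₀|) hmax
    calc |r s₀ a + γ * ∑ s', (T s₀ a s').toReal * V s'|
        ≤ |r s₀ a| + |γ * ∑ s', (T s₀ a s').toReal * V s'| := abs_add_le _ _
      _ ≤ Rmax + γ * |V s₀| := by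
          rw [abs_mul, abs_of_nonneg hγ0]
          exact add_le_add h1 (mul_le_mul_of_nonneg_left h2 hγ0)
  have hb : |V s₀| ≤ Rmax / (1 - γ) := by
    rw [le_div_iff₀ hpos]; nlinarith
  intro s
  exact le_trans (hmax s) hb

/-- Lemma bounding the performance difference of two policies by the total
variation distance between them, with constant `2 Rmax / (1 - γ)²`. -/
theorem value_difference_le_total_variation
    {S A : Type*} [Fintype S] [Fintype A] [Nonempty S] [Nonempty A]
    (T : S → A → PMF S)
    (pol₁ pol₂ : S → PMF A)
    (r : S → A → ℝ) (Rmax : ℝ)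
    (hr : ∀ s a, 0 ≤ r s a ∧ r s a ≤ Rmax)
    (γ : ℝ) (hγ0 : 0 ≤ γ) (hγ1 : γ < 1)
    (V₁ V₂ : S → ℝ)
    (hV₁ : ∀ s, V₁ s = ∑ a, (pol₁ s a).toReal *
        (r s a + γ * ∑ s', (T s a s').toReal * V₁ s'))
    (hV₂ : ∀ s, V₂ s = ∑ a, (pol₂ s a).toReal *
        (r s a + γ * ∑ s', (T s a s').toReal * V₂ s')) :
    ∀ s,
      (|V₁ s - V₂ s| ≤
        (Rmax / (1 - γ)^2) *
          (⨆ s' : S, ∑ a, |(pol₁ s' a).toReal - (pol₂ s' a).toReal|)) ∧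
      (|V₁ s - V₂ s| ≤
        (2 * Rmax / (1 - γ)^2) *
          (⨆ s' : S, (1/2) * ∑ a, |(pol₁ s' a).toReal - (pol₂ s' a).toReal|)) := by
  have hpos : (0:ℝ) < 1 - γ := by linarith
  have hRmax : 0 ≤ Rmax :=
    le_trans (hr (Classical.arbitrary S) (Classical.arbitrary A)).1
      (hr (Classical.arbitrary S) (Classical.arbitrary A)).2
  -- Q-value bounds
  set Q₁ : S → A → ℝ := fun s a => r s a + γ * ∑ s', (T s a s').toReal * V₁ s' with hQ₁
  set Q₂ : S → A → ℝ := fun s a => r s a + γ * ∑ s', (T s a s').toReal * V₂ s' with hQ₂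
  have hVb₁ := value_abs_bound T pol₁ r Rmax hr γ hγ0 hγ1 V₁ hV₁
  have hVb₂ := value_abs_bound T pol₂ r Rmax hr γ hγ0 hγ1 V₂ hV₂
  have hQb : ∀ s a, |Q₁ s a| ≤ Rmax / (1 - γ) := by
    intro s a
    have h2 : |∑ s', (T s a s').toReal * V₁ s'| ≤ Rmax / (1 - γ) :=
      weighted_avg_le (T s a) V₁ _ hVb₁
    have h1 : |r s a| ≤ Rmax := by rw [abs_of_nonneg (hr s a).1]; exact (hr s a).2
    calc |Q₁ s a| ≤ |r s a| + |γ * ∑ s', (T s a s').toReal * V₁ s'| := abs_add_le _ _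
      _ ≤ Rmax + γ * (Rmax / (1 - γ)) := by
          rw [abs_mul, abs_of_nonneg hγ0]
          exact add_le_add h1 (mul_le_mul_of_nonneg_left h2 hγ0)
      _ = Rmax / (1 - γ) := by field_simp; ring
  -- the TV-like quantity
  set D : ℝ := ⨆ s' : S, ∑ a, |(pol₁ s' a).toReal - (pol₂ s' a).toReal| with hD
  have hbdd : BddAbove (Set.range fun s' : S =>
      ∑ a, |(pol₁ s' a).toReal - (pol₂ s' a).toReal|) :=
    Set.Finite.bddAbove (Set.finite_range _)
  have hDle : ∀ s', ∑ a, |(pol₁ s' a).toReal - (pol₂ s' a).toReal| ≤ D :=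
    fun s' => le_ciSup hbdd s'
  have hD0 : 0 ≤ D :=
    le_trans (Finset.sum_nonneg fun a _ => abs_nonneg _) (hDle (Classical.arbitrary S))
  -- maximize |V₁ - V₂|
  obtain ⟨s₀, -, hs₀⟩ := Finset.exists_max_image Finset.univ (fun s => |V₁ s - V₂ s|)
    ⟨Classical.arbitrary S, Finset.mem_univ _⟩
  have hmax : ∀ s, |V₁ s - V₂ s| ≤ |V₁ s₀ - V₂ s₀| := fun s => hs₀ s (Finset.mem_univ s)
  set M : ℝ := |V₁ s₀ - V₂ s₀| with hM
  have hQdiff : ∀ a, |Q₁ s₀ a - Q₂ s₀ a| ≤ γ * M := by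
    intro a
    have : Q₁ s₀ a - Q₂ s₀ a = γ * ∑ s', (T s₀ a s').toReal * (V₁ s' - V₂ s') := by
      simp only [hQ₁, hQ₂, mul_sub, Finset.sum_sub_distrib]
      ring
    rw [this, abs_mul, abs_of_nonneg hγ0]
    refine mul_le_mul_of_nonneg_left ?_ hγ0
    exact weighted_avg_le (T s₀ a) (fun s' => V₁ s' - V₂ s') M hmax
  have key : M ≤ (Rmax / (1 - γ)) * D + γ * M := by
    have hsplit : V₁ s₀ - V₂ s₀ =
        ∑ a, (((pol₁ s₀ a).toReal - (pol₂ s₀ a).toReal) * Q₁ s₀ a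
              + (pol₂ s₀ a).toReal * (Q₁ s₀ a - Q₂ s₀ a)) := by
      rw [hV₁ s₀, hV₂ s₀, ← Finset.sum_sub_distrib]
      congr 1; ext a; simp only [hQ₁, hQ₂]; ring
    calc M ≤ ∑ a, (|(pol₁ s₀ a).toReal - (pol₂ s₀ a).toReal| * |Q₁ s₀ a|
              + (pol₂ s₀ a).toReal * |Q₁ s₀ a - Q₂ s₀ a|) := by
          rw [hM, hsplit]
          refine le_trans (Finset.abs_sum_le_sum_abs _ _) (Finset.sum_le_sum ?_)
          intro a _
          refine le_trans (abs_add_le _ _) (add_le_add ?_ ?_)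
          · rw [abs_mul]
          · rw [abs_mul, abs_of_nonneg ENNReal.toReal_nonneg]
      _ ≤ ∑ a, (|(pol₁ s₀ a).toReal - (pol₂ s₀ a).toReal| * (Rmax / (1 - γ))
              + (pol₂ s₀ a).toReal * (γ * M)) := by
          refine Finset.sum_le_sum ?_
          intro a _
          refine add_le_add ?_ ?_
          · exact mul_le_mul_of_nonneg_left (hQb s₀ a) (abs_nonneg _)
          · exact mul_le_mul_of_nonneg_left (hQdiff a) ENNReal.toReal_nonneg
      _ = (∑ a, |(pol₁ s₀ a).toReal - (pol₂ s₀ a).toReal|) * (Rmax / (1 - γ))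
            + (∑ a, (pol₂ s₀ a).toReal) * (γ * M) := by
          rw [Finset.sum_add_distrib, Finset.sum_mul, Finset.sum_mul]
      _ ≤ (Rmax / (1 - γ)) * D + γ * M := by
          rw [pmf_sum_toReal, one_mul]
          have h0 : (0:ℝ) ≤ Rmax / (1 - γ) := div_nonneg hRmax hpos.le
          have := mul_le_mul_of_nonneg_right (hDle s₀) h0
          rw [mul_comm] at this
          linarith
  have hM2 : M ≤ (Rmax / (1 - γ)^2) * D := by
    have h1 : M ≤ ((Rmax / (1 - γ)) * D) / (1 - γ) := by
      rw [le_div_iff₀ hpos]; nlinarith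
    have h2 : ((Rmax / (1 - γ)) * D) / (1 - γ) = (Rmax / (1 - γ)^2) * D := by
      rw [pow_two, ← div_div]; ring
    linarith
  intro s
  have hfirst : |V₁ s - V₂ s| ≤ (Rmax / (1 - γ)^2) * D := le_trans (hmax s) hM2
  refine ⟨hfirst, ?_⟩
  have heq : (2 * Rmax / (1 - γ)^2) *
      (⨆ s' : S, (1/2) * ∑ a, |(pol₁ s' a).toReal - (pol₂ s' a).toReal|) =
      (Rmax / (1 - γ)^2) * D := by
    rw [← Real.mul_iSup_of_nonneg (by norm_num : (0:ℝ) ≤ 1/2), hD]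
    ring
  rw [heq]
  exact hfirst
end

section
/- Let (Ω, 𝔽, P) be a probability space, 𝒳 a measurable space, X₁, X₂, … : Ω → 𝒳 a sequence of independent identically distributed random variables, and ψ : 𝒳 → ℝ^d a bounded measurable function. Let M = E[ψ(X₁) ψ(X₁)ᵀ] ∈ ℝ^{d×d} and Mₙ = (1/n) Σ_{k=1}^n ψ(X_k) ψ(X_k)ᵀ. Then: (i) almost surely, Mₙ converges to M entrywise as n → ∞; and (ii) for every ε > 0 that is not an eigenvalue of M, almost surely there exists N such that for all n ≥ N, the number of eigenvalues (counted with multiplicity) of the symmetric matrix Mₙ which are strictly greater than ε equals the number of eigenvalues of M strictly greater than ε. -/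
open MeasureTheory ProbabilityTheory Filter
open scoped BigOperators

/-- The number of eigenvalues (with multiplicity) of a real symmetric matrix
that are strictly greater than a threshold `ε`. -/
noncomputable def eigCountAbove {d : ℕ} {A : Matrix (Fin d) (Fin d) ℝ}
    (hA : A.IsHermitian) (ε : ℝ) : ℕ :=
  (Finset.univ.filter fun i => ε < hA.eigenvalues i).card

section auxLemmas
open Matrix Polynomial

/-- Characteristic-determinant formula for real symmetric matrices. -/
lemma det_smul_one_sub_eq {d : ℕ} {A : Matrix (Fin d) (Fin d) ℝ}
    (hA : A.IsHermitian) (x : ℝ) :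
    (x • (1 : Matrix (Fin d) (Fin d) ℝ) - A).det = ∏ i, (x - hA.eigenvalues i) := by
  set U := (hA.eigenvectorUnitary : Matrix (Fin d) (Fin d) ℝ) with hUdef
  have hU : star U * U = 1 :=
    Matrix.mem_unitaryGroup_iff'.mp (hA.eigenvectorUnitary).2
  have hdiag : star U * A * U = Matrix.diagonal hA.eigenvalues := by
    simpa using hA.conjStarAlgAut_star_eigenvectorUnitary
  have h1 : star U * ((x • (1 : Matrix (Fin d) (Fin d) ℝ)) - A) * U
      = Matrix.diagonal (fun i => x - hA.eigenvalues i) := by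
    rw [Matrix.mul_sub, Matrix.sub_mul, hdiag, Matrix.mul_smul, Matrix.smul_mul, mul_one, hU]
    ext i j
    by_cases h : i = j <;> simp [Matrix.diagonal, h, Matrix.one_apply]
  have h2 := congrArg Matrix.det h1
  rw [Matrix.det_mul, Matrix.det_mul, Matrix.det_diagonal] at h2
  have h3 : (star U).det * U.det = 1 := by
    rw [← Matrix.det_mul, hU, Matrix.det_one]
  calc (x • (1 : Matrix (Fin d) (Fin d) ℝ) - A).det
      = ((star U).det * U.det) * (x • (1 : Matrix (Fin d) (Fin d) ℝ) - A).det := by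
        rw [h3, one_mul]
    _ = (star U).det * (x • (1 : Matrix (Fin d) (Fin d) ℝ) - A).det * U.det := by ring
    _ = ∏ i, (x - hA.eigenvalues i) := h2

/-- If two `d`-tuples of reals have the same monic product polynomial (as functions),
they are equal as multisets. -/
lemma multiset_eq_of_prod_eq {d : ℕ} (μ ν : Fin d → ℝ)
    (h : ∀ x : ℝ, ∏ i, (x - μ i) = ∏ i, (x - ν i)) :
    Multiset.map μ Finset.univ.val = Multiset.map ν Finset.univ.val := by
  have hp : ((Multiset.map μ Finset.univ.val).map fun a => (X : ℝ[X]) - C a).prod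
      = ((Multiset.map ν Finset.univ.val).map fun a => (X : ℝ[X]) - C a).prod := by
    apply Polynomial.funext
    intro r
    rw [Polynomial.eval_multiset_prod, Polynomial.eval_multiset_prod]
    simp only [Multiset.map_map, Function.comp, eval_sub, eval_X, eval_C]
    have h1 : ∀ (w : Fin d → ℝ), (Multiset.map (fun i => r - w i) Finset.univ.val).prod
        = ∏ i, (r - w i) := fun w => (Finset.prod_eq_multiset_prod _ _).symm
    rw [h1, h1, h r]
  have h2 := congrArg Polynomial.roots hp
  rwa [Polynomial.roots_multiset_prod_X_sub_C, Polynomial.roots_multiset_prod_X_sub_C] at h2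

lemma card_filter_eq_of_multiset_eq {d : ℕ} {μ ν : Fin d → ℝ}
    (h : Multiset.map μ Finset.univ.val = Multiset.map ν Finset.univ.val)
    (p : ℝ → Prop) [DecidablePred p] :
    (Finset.univ.filter fun i => p (μ i)).card = (Finset.univ.filter fun i => p (ν i)).card := by
  have h2 := congrArg (Multiset.countP p) h
  rw [Multiset.countP_map, Multiset.countP_map] at h2
  rw [Finset.card_def, Finset.card_def, Finset.filter_val, Finset.filter_val]
  exact h2

/-- Gershgorin-type bound on the eigenvalues of a real symmetric matrix
in terms of a uniform bound on its entries. -/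
lemma eig_abs_le {d : ℕ} {A : Matrix (Fin d) (Fin d) ℝ} (hA : A.IsHermitian)
    {B : ℝ} (hB : ∀ i j, |A i j| ≤ B) (i : Fin d) :
    |hA.eigenvalues i| ≤ (d + 1) * B := by
  have hspec : hA.eigenvalues i ∈ spectrum ℝ A := hA.eigenvalues_mem_spectrum_real i
  have hspec' : hA.eigenvalues i ∈ spectrum ℝ (Matrix.toLin' A) := by
    have : (Matrix.toLinAlgEquiv' A : (Fin d → ℝ) →ₗ[ℝ] (Fin d → ℝ)) = Matrix.toLin' A := rfl
    rw [← this, AlgEquiv.spectrum_eq]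
    exact hspec
  have hev : Module.End.HasEigenvalue (Matrix.toLin' A) (hA.eigenvalues i) :=
    Module.End.HasEigenvalue.of_mem_spectrum hspec'
  obtain ⟨k, hk⟩ := eigenvalue_mem_ball hev
  rw [Metric.mem_closedBall, Real.dist_eq] at hk
  have hBnn : 0 ≤ B := le_trans (abs_nonneg _) (hB k k)
  have hsum : ∑ j ∈ Finset.univ.erase k, ‖A k j‖ ≤ (d : ℝ) * B := by
    calc ∑ j ∈ Finset.univ.erase k, ‖A k j‖ ≤ ∑ _j ∈ Finset.univ.erase k, B :=
          Finset.sum_le_sum fun j _ => hB k j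
      _ = ((Finset.univ.erase k).card : ℝ) * B := by rw [Finset.sum_const, nsmul_eq_mul]
      _ ≤ (d : ℝ) * B := by
          apply mul_le_mul_of_nonneg_right _ hBnn
          exact_mod_cast le_trans (Finset.card_le_card (Finset.erase_subset _ _)) (by simp)
  calc |hA.eigenvalues i| = |(hA.eigenvalues i - A k k) + A k k| := by ring_nf
    _ ≤ |hA.eigenvalues i - A k k| + |A k k| := abs_add_le _ _
    _ ≤ (d : ℝ) * B + B := add_le_add (le_trans hk hsum) (hB k k)
    _ = (d + 1) * B := by ring

/-- Stability of the eigenvalue count above a non-eigenvalue threshold under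
entrywise convergence of uniformly bounded symmetric matrices. -/
lemma eigCount_eventually_eq {d : ℕ} {A : ℕ → Matrix (Fin d) (Fin d) ℝ}
    {L : Matrix (Fin d) (Fin d) ℝ} (hAh : ∀ n, (A n).IsHermitian) (hL : L.IsHermitian)
    (hconv : ∀ i j, Tendsto (fun n => A n i j) atTop (nhds (L i j)))
    {B : ℝ} (hB : ∀ n i j, |A n i j| ≤ B)
    {ε : ℝ} (hε : ∀ i, hL.eigenvalues i ≠ ε) :
    ∀ᶠ n in atTop, eigCountAbove (hAh n) ε = eigCountAbove hL ε := by
  by_contra hcon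
  rw [Filter.not_eventually] at hcon
  obtain ⟨φ, hφmono, hφ⟩ := Filter.extraction_of_frequently_atTop hcon
  -- the eigenvalue vectors along the subsequence, and their bound
  set v : ℕ → (Fin d → ℝ) := fun n => (hAh (φ n)).eigenvalues with hv
  have hR : ∀ n, v n ∈ Metric.closedBall (0 : Fin d → ℝ) ((d + 1) * B ⊔ 0) := by
    intro n
    rw [Metric.mem_closedBall, dist_zero_right]
    refine (pi_norm_le_iff_of_nonneg (le_sup_right)).2 fun i => ?_
    exact le_sup_of_le_left (by simpa [Real.norm_eq_abs] using eig_abs_le (hAh (φ n)) (hB (φ n)) i)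
  obtain ⟨μ, -, θ, hθmono, hθ⟩ :=
    tendsto_subseq_of_bounded Metric.isBounded_closedBall hR
  have hθi : ∀ i, Tendsto (fun n => v (θ n) i) atTop (nhds (μ i)) := by
    intro i
    exact (tendsto_pi_nhds.mp hθ i)
  -- entrywise convergence of the matrices along the sub-subsequence
  have hconv' : Tendsto (fun n => A (φ (θ n))) atTop (nhds L) := by
    refine tendsto_pi_nhds.mpr ?_
    intro i
    rw [tendsto_pi_nhds]
    intro j
    exact (hconv i j).comp ((hφmono.comp hθmono).tendsto_atTop)
  -- identification of the limiting eigenvalue multiset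
  have hprod : ∀ x : ℝ, ∏ i, (x - μ i) = ∏ i, (x - hL.eigenvalues i) := by
    intro x
    have hdet : Tendsto (fun n => (x • (1 : Matrix (Fin d) (Fin d) ℝ) - A (φ (θ n))).det)
        atTop (nhds ((x • (1 : Matrix (Fin d) (Fin d) ℝ) - L).det)) := by
      have hcont : Continuous fun M : Matrix (Fin d) (Fin d) ℝ =>
          (x • (1 : Matrix (Fin d) (Fin d) ℝ) - M).det :=
        (continuous_const.sub continuous_id).matrix_det
      exact (hcont.tendsto L).comp hconv'
    have hdet2 : Tendsto (fun n => ∏ i, (x - v (θ n) i)) atTop (nhds (∏ i, (x - μ i))) := by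
      apply tendsto_finset_prod
      intro i _
      exact tendsto_const_nhds.sub (hθi i)
    have heq : (fun n => (x • (1 : Matrix (Fin d) (Fin d) ℝ) - A (φ (θ n))).det)
        = fun n => ∏ i, (x - v (θ n) i) := by
      funext n
      exact det_smul_one_sub_eq (hAh (φ (θ n))) x
    rw [heq] at hdet
    have := tendsto_nhds_unique hdet hdet2
    rw [← this, det_smul_one_sub_eq hL x]
  have hmult : Multiset.map μ Finset.univ.val = Multiset.map hL.eigenvalues Finset.univ.val :=
    multiset_eq_of_prod_eq _ _ hprod
  -- each limiting eigenvalue avoids ε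
  have hμε : ∀ i, μ i ≠ ε := by
    intro i
    have : μ i ∈ Multiset.map hL.eigenvalues Finset.univ.val := by
      rw [← hmult]
      exact Multiset.mem_map_of_mem _ (Finset.mem_univ i)
    obtain ⟨j, -, hj⟩ := Multiset.mem_map.mp this
    rw [← hj]
    exact hε j
  -- eventually the counts along the sub-subsequence agree with the limit count
  have hev : ∀ᶠ n in atTop, ∀ i, (ε < v (θ n) i ↔ ε < μ i) := by
    rw [eventually_all]
    intro i
    rcases lt_or_gt_of_ne (hμε i).symm with hlt | hgt
    · filter_upwards [(hθi i).eventually_const_lt hlt] with n hn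
      simp [hn, hlt]
    · filter_upwards [(hθi i).eventually_lt_const hgt] with n hn
      constructor
      · intro h; exact absurd h (not_lt.mpr hn.le)
      · intro h; exact absurd h (not_lt.mpr hgt.le)
  obtain ⟨N, hN⟩ := eventually_atTop.mp hev
  apply hφ (θ N)
  have hiff := hN N le_rfl
  unfold eigCountAbove
  have h1 : (Finset.univ.filter fun i => ε < (hAh (φ (θ N))).eigenvalues i).card
      = (Finset.univ.filter fun i => ε < μ i).card := by
    congr 1
    exact Finset.filter_congr fun i _ => hiff i
  rw [h1]
  exact card_filter_eq_of_multiset_eq hmult (fun a => ε < a)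
/-- SLLN part: a.s. entrywise convergence. -/
lemma slln_entry
    {Ω : Type*} [MeasurableSpace Ω] (P : Measure Ω) [IsProbabilityMeasure P]
    {𝒳 : Type*} [MeasurableSpace 𝒳]
    (X : ℕ → Ω → 𝒳) (hXmeas : ∀ k, Measurable (X k))
    (hindep : iIndepFun X P)
    (hident : ∀ k, IdentDistrib (X k) (X 0) P P)
    {d : ℕ}
    (ψ : 𝒳 → Fin d → ℝ) (hψmeas : Measurable ψ)
    (C : ℝ) (hψbdd : ∀ x i, |ψ x i| ≤ C)
    (M : Matrix (Fin d) (Fin d) ℝ)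
    (hM : ∀ i j, M i j = ∫ ω, ψ (X 0 ω) i * ψ (X 0 ω) j ∂P)
    (Mn : ℕ → Ω → Matrix (Fin d) (Fin d) ℝ)
    (hMn : ∀ n ω i j,
      Mn n ω i j = (1/(n:ℝ)) * ∑ k ∈ Finset.range n, ψ (X k ω) i * ψ (X k ω) j) :
    ∀ᵐ ω ∂P, ∀ i j, Tendsto (fun n => Mn n ω i j) atTop (nhds (M i j)) := by
  rw [ae_all_iff]
  intro i
  rw [ae_all_iff]
  intro j
  set g : 𝒳 → ℝ := fun x => ψ x i * ψ x j with hg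
  have hgmeas : Measurable g :=
    ((measurable_pi_apply i).comp hψmeas).mul ((measurable_pi_apply j).comp hψmeas)
  set Y : ℕ → Ω → ℝ := fun k ω => g (X k ω) with hY
  have hYmeas : ∀ k, Measurable (Y k) := fun k => hgmeas.comp (hXmeas k)
  have hint : Integrable (Y 0) P := by
    refine (integrable_const (C * C)).mono' ((hYmeas 0).aestronglyMeasurable) ?_
    refine Filter.Eventually.of_forall fun ω => ?_
    have h1 : |ψ (X 0 ω) i * ψ (X 0 ω) j| ≤ C * C := by
      rw [abs_mul]
      exact mul_le_mul (hψbdd (X 0 ω) i) (hψbdd (X 0 ω) j) (abs_nonneg (ψ (X 0 ω) j))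
        (le_trans (abs_nonneg (ψ (X 0 ω) i)) (hψbdd (X 0 ω) i))
    show ‖Y 0 ω‖ ≤ C * C
    rw [Real.norm_eq_abs]
    exact h1
  have hindep' : Pairwise (Function.onFun (IndepFun · · P) Y) := by
    intro k l hkl
    exact (hindep.indepFun hkl).comp hgmeas hgmeas
  have hident' : ∀ k, IdentDistrib (Y k) (Y 0) P P := fun k => (hident k).comp hgmeas
  have hslln := strong_law_ae_real Y hint hindep' hident'
  filter_upwards [hslln] with ω hω
  have hint0 : P[Y 0] = M i j := by rw [hM i j]
  rw [hint0] at hω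
  have : (fun n : ℕ => Mn n ω i j) = fun n : ℕ => (∑ k ∈ Finset.range n, Y k ω) / n := by
    funext n
    rw [hMn n ω i j, one_div, inv_mul_eq_div]
  rw [this]
  exact hω
end auxLemmas

/-- Lemma 1 of the paper: the empirical second-moment matrix of i.i.d.
bounded features converges entrywise almost surely to its population
counterpart, and consequently the empirical effective-dimension count (the
number of eigenvalues above a threshold `ε` that is not an eigenvalue of
the limit) is a consistent estimator of the population effective dimension. -/
theorem effective_dimension_consistent
    {Ω : Type*} [MeasurableSpace Ω] (P : Measure Ω) [IsProbabilityMeasure P]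
    {𝒳 : Type*} [MeasurableSpace 𝒳]
    (X : ℕ → Ω → 𝒳) (hXmeas : ∀ k, Measurable (X k))
    (hindep : iIndepFun X P)
    (hident : ∀ k, IdentDistrib (X k) (X 0) P P)
    {d : ℕ} (hd : 1 ≤ d)
    (ψ : 𝒳 → Fin d → ℝ) (hψmeas : Measurable ψ)
    (C : ℝ) (hψbdd : ∀ x i, |ψ x i| ≤ C)
    (M : Matrix (Fin d) (Fin d) ℝ)
    (hM : ∀ i j, M i j = ∫ ω, ψ (X 0 ω) i * ψ (X 0 ω) j ∂P)
    (Mn : ℕ → Ω → Matrix (Fin d) (Fin d) ℝ)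
    (hMn : ∀ n ω i j,
      Mn n ω i j = (1/(n:ℝ)) * ∑ k ∈ Finset.range n, ψ (X k ω) i * ψ (X k ω) j)
    (hMherm : M.IsHermitian) (hMnherm : ∀ n ω, (Mn n ω).IsHermitian) :
    (∀ᵐ ω ∂P, ∀ i j,
        Tendsto (fun n => Mn n ω i j) atTop (nhds (M i j))) ∧
    (∀ ε : ℝ, 0 < ε → (∀ i, hMherm.eigenvalues i ≠ ε) →
      ∀ᵐ ω ∂P, ∃ N, ∀ n ≥ N,
        eigCountAbove (hMnherm n ω) ε = eigCountAbove hMherm ε) := by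
  have part1 : ∀ᵐ ω ∂P, ∀ i j, Tendsto (fun n => Mn n ω i j) atTop (nhds (M i j)) :=
    slln_entry P X hXmeas hindep hident ψ hψmeas C hψbdd M hM Mn hMn
  refine ⟨part1, ?_⟩
  intro ε hε0 hεne
  filter_upwards [part1] with ω hω
  have hB : ∀ n i j, |Mn n ω i j| ≤ C * C := by
    intro n i j
    rw [hMn n ω i j]
    rcases Nat.eq_zero_or_pos n with h0 | hpos
    · subst h0
      simpa using mul_self_nonneg C
    · have hterm : ∀ k ∈ Finset.range n, |ψ (X k ω) i * ψ (X k ω) j| ≤ C * C := by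
        intro k _
        rw [abs_mul]
        exact mul_le_mul (hψbdd (X k ω) i) (hψbdd (X k ω) j) (abs_nonneg (ψ (X k ω) j))
          (le_trans (abs_nonneg (ψ (X k ω) i)) (hψbdd (X k ω) i))
      have hn : (0:ℝ) < n := by exact_mod_cast hpos
      calc |(1/(n:ℝ)) * ∑ k ∈ Finset.range n, ψ (X k ω) i * ψ (X k ω) j|
          = (1/(n:ℝ)) * |∑ k ∈ Finset.range n, ψ (X k ω) i * ψ (X k ω) j| := by
            rw [abs_mul, abs_of_nonneg (by positivity)]
        _ ≤ (1/(n:ℝ)) * ((n:ℝ) * (C * C)) := by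
            apply mul_le_mul_of_nonneg_left _ (by positivity)
            calc |∑ k ∈ Finset.range n, ψ (X k ω) i * ψ (X k ω) j|
                ≤ ∑ k ∈ Finset.range n, |ψ (X k ω) i * ψ (X k ω) j| :=
                  Finset.abs_sum_le_sum_abs _ _
              _ ≤ ∑ _k ∈ Finset.range n, (C * C) := Finset.sum_le_sum hterm
              _ = (n:ℝ) * (C * C) := by
                  rw [Finset.sum_const, Finset.card_range, nsmul_eq_mul]
        _ = C * C := by field_simp
  have := eigCount_eventually_eq (A := fun n => Mn n ω) (L := M)
    (fun n => hMnherm n ω) hMherm (fun i j => hω i j) hB hεne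
  exact eventually_atTop.mp this
end
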